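/- The function ψ(z) = z(1 + iz/3)/(1 − iz/3) satisfies ψ(0) = 0, ψ'(0) = 1, and Re(zψ'(z)/ψ(z)) > 0 for all z in the open unit disk with z ≠ 0; hence ψ is starlike. -/

import Mathlib

open Complex

noncomputable def ψ : ℂ → ℂ := fun z => z * (1 + I * z / 3) / (1 - I * z / 3)

lemma psi_hasDerivAt (z : ℂ) (h : (1 - I * z / 3) ≠ 0) :
    HasDerivAt ψ ((1 + 2 * (I * z / 3) - (I * z / 3) ^ 2) / (1 - I * z / 3) ^ 2) z := by
  have h1 : HasDerivAt (fun z : ℂ => 1 + I * z / 3) (I / 3) z := by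
    simpa using (((hasDerivAt_id z).const_mul I).div_const 3).const_add 1
  have hD : HasDerivAt (fun z : ℂ => 1 - I * z / 3) (-(I / 3)) z := by
    simpa using (((hasDerivAt_id z).const_mul I).div_const 3).const_sub 1
  have hN : HasDerivAt (fun z : ℂ => z * (1 + I * z / 3))
      (1 * (1 + I * z / 3) + z * (I / 3)) z := (hasDerivAt_id z).mul h1
  have := hN.div hD h
  refine HasDerivAt.congr_deriv this ?_
  rw [div_eq_div_iff (pow_ne_zero 2 h) (pow_ne_zero 2 h)]
  ring

theorem psi_starlike :
    ψ 0 = 0 ∧ deriv ψ 0 = 1 ∧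
      ∀ z : ℂ, ‖z‖ < 1 → z ≠ 0 → 0 < (z * deriv ψ z / ψ z).re := by
  refine ⟨by simp [ψ], ?_, ?_⟩
  · have h := psi_hasDerivAt 0 (by norm_num)
    simpa using h.deriv
  · intro z hz h0
    set w : ℂ := I * z / 3 with hw
    have habsw : ‖w‖ < 1 / 3 := by
      have : ‖w‖ = ‖z‖ / 3 := by
        simp [hw, map_div₀, map_mul]
      rw [this]; linarith
    have hden : (1 : ℂ) - w ≠ 0 := by
      intro hc
      have : ‖1 - w‖ = 0 := by rw [hc]; simp
      have h1 : (1 : ℝ) - ‖w‖ ≤ ‖1 - w‖ := by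
        simpa using (norm_sub_norm_le (1 : ℂ) w)
      linarith
    have hnum : (1 : ℂ) + w ≠ 0 := by
      intro hc
      have h1 : (1 : ℝ) - ‖w‖ ≤ ‖1 + w‖ := by
        simpa using (norm_sub_norm_le (1 : ℂ) (-w))
      rw [hc] at h1; simp at h1; linarith
    have hsq : (1 : ℂ) - w ^ 2 ≠ 0 := by
      have : (1 : ℂ) - w ^ 2 = (1 - w) * (1 + w) := by ring
      rw [this]; exact mul_ne_zero hden hnum
    have hden' : (1 : ℂ) - I * z / 3 ≠ 0 := by rw [← hw]; exact hden
    have hderiv : deriv ψ z = (1 + 2 * w - w ^ 2) / (1 - w) ^ 2 := by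
      rw [(psi_hasDerivAt z hden').deriv, hw]
    have key : z * deriv ψ z / ψ z = 1 + 2 * w / (1 - w ^ 2) := by
      rw [hderiv]
      show z * ((1 + 2 * w - w ^ 2) / (1 - w) ^ 2) / (z * (1 + I * z / 3) / (1 - I * z / 3)) = _
      rw [← hw]
      field_simp
      ring
    rw [key]
    have habs2 : ‖2 * w / (1 - w ^ 2)‖ < 1 := by
      rw [norm_div, norm_mul]
      have hlow : (8 : ℝ) / 9 < ‖1 - w ^ 2‖ := by
        have h1 : (1 : ℝ) ≤ ‖1 - w ^ 2‖ + ‖w ^ 2‖ := by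
          have := norm_sub_norm_le (1 : ℂ) (w ^ 2)
          simp only [norm_one] at this
          linarith
        rw [norm_pow] at h1
        nlinarith [norm_nonneg w]
      have hup : ‖(2 : ℂ)‖ * ‖w‖ < 2 / 3 := by
        simp only [Complex.norm_two]
        linarith
      rw [div_lt_one (by linarith)]
      nlinarith
    have hre : -‖2 * w / (1 - w ^ 2)‖ ≤ (2 * w / (1 - w ^ 2)).re := by
      have h1 := Complex.abs_re_le_norm (2 * w / (1 - w ^ 2))
      have h2 := neg_abs_le ((2 * w / (1 - w ^ 2)).re)
      linarith
    simp only [Complex.add_re, Complex.one_re]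
    linarith
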